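/- Fix 0 < 9m²Λ < 1 with m, Λ > 0. The polynomial p(r) = r - 2m - (Λ/3) r³ (equivalently the function α(r)² = 1 - 2m/r - Λr²/3 multiplied by r) has exactly two distinct positive roots r_H < r_I, and p(r) > 0 for r ∈ (r_H, r_I). -/

import Mathlib

/-- For `m, Λ > 0` with `9m²Λ < 1`, the polynomial `p(r) = r - 2m - (Λ/3) r³` has
exactly two distinct positive roots `r_H < r_I`, and `p > 0` on `(r_H, r_I)`. -/
theorem deSitterSchwarzschild_roots (m Λ : ℝ) (hm : 0 < m) (hΛ : 0 < Λ)
    (h9 : 9 * m^2 * Λ < 1) :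
    ∃ rH rI : ℝ, 0 < rH ∧ rH < rI ∧
      (rH - 2*m - Λ/3 * rH^3 = 0) ∧ (rI - 2*m - Λ/3 * rI^3 = 0) ∧
      (∀ r : ℝ, 0 < r → r - 2*m - Λ/3 * r^3 = 0 → r = rH ∨ r = rI) ∧
      (∀ r ∈ Set.Ioo rH rI, 0 < r - 2*m - Λ/3 * r^3) := by
  set f : ℝ → ℝ := fun r => r - 2*m - Λ/3 * r^3 with hf
  set s : ℝ := Real.sqrt Λ with hs
  have hs0 : 0 < s := Real.sqrt_pos.mpr hΛ
  have hs2 : s^2 = Λ := Real.sq_sqrt hΛ.le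
  set c : ℝ := 1 / s with hc
  have hc0 : 0 < c := by positivity
  have hcont : Continuous f := by fun_prop
  have hderiv : ∀ r : ℝ, HasDerivAt f (1 - Λ * r^2) r := by
    intro r
    have h1 : HasDerivAt f (1 - Λ/3 * (↑3 * r^(3-1))) r :=
      ((hasDerivAt_id r).sub_const (2*m)).sub ((hasDerivAt_pow 3 r).const_mul (Λ/3))
    convert h1 using 1
    push_cast
    ring
  -- value at c
  have hfc : f c = 2/(3*s) - 2*m := by
    have : Λ * c^3 = c := by
      rw [hc]
      field_simp
      nlinarith [hs2]
    simp only [hf]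
    rw [show Λ/3 * c^3 = (Λ * c^3)/3 by ring, this, hc]
    field_simp
    ring
  have hms : 3 * m * s < 1 := by
    nlinarith [hs2, hs0, sq_nonneg (3*m*s - 1)]
  have hfcpos : 0 < f c := by
    rw [hfc]
    rw [div_sub' (by positivity)]
    apply div_pos _ (by positivity)
    nlinarith
  have hf0 : f 0 = -(2*m) := by simp [hf]
  -- monotone on [0,c]
  have hmono : StrictMonoOn f (Set.Icc 0 c) := by
    apply strictMonoOn_of_deriv_pos (convex_Icc 0 c) hcont.continuousOn
    intro r hr
    rw [interior_Icc] at hr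
    rw [(hderiv r).deriv]
    have h1 : s * r < 1 := by
      have := hr.2
      rw [hc, lt_div_iff₀ hs0] at this
      linarith [this]
    have h2 : Λ * r^2 = (s*r)^2 := by rw [← hs2]; ring
    nlinarith [mul_pos hs0 hr.1]
  -- antitone on [c,∞)
  have hanti : StrictAntiOn f (Set.Ici c) := by
    apply strictAntiOn_of_deriv_neg (convex_Ici c) hcont.continuousOn
    intro r hr
    rw [interior_Ici] at hr
    rw [(hderiv r).deriv]
    have h1 : 1 < s * r := by
      rw [Set.mem_Ioi, hc, div_lt_iff₀ hs0] at hr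
      linarith
    have h2 : Λ * r^2 = (s*r)^2 := by rw [← hs2]; ring
    nlinarith [h1]
  -- root rH in (0,c)
  obtain ⟨rH, hrHmem, hrH⟩ : ∃ x ∈ Set.Icc (0:ℝ) c, f x = 0 := by
    have := intermediate_value_Icc hc0.le hcont.continuousOn
    have h0 : (0:ℝ) ∈ Set.Icc (f 0) (f c) := by
      constructor
      · rw [hf0]; linarith
      · exact hfcpos.le
    exact this h0
  have hrH0 : 0 < rH := by
    rcases hrHmem.1.lt_or_eq with h | h
    · exact h
    · exfalso; rw [← h, hf0] at hrH; linarith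
  have hrHc : rH < c := by
    rcases hrHmem.2.lt_or_eq with h | h
    · exact h
    · exfalso; rw [h] at hrH; linarith [hfcpos, hrH]
  -- big R with f R < 0
  set R : ℝ := Real.sqrt (3/Λ) + 1 with hR
  clear_value R
  have hR3 : Real.sqrt (3/Λ) ^ 2 = 3/Λ := Real.sq_sqrt (by positivity)
  have hRpos : 0 < Real.sqrt (3/Λ) := Real.sqrt_pos.mpr (by positivity)
  have hRc : c < R := by
    have hce : c = Real.sqrt (1/Λ) := by
      rw [hc, hs, one_div, one_div, ← Real.sqrt_inv]
    have h1 : c ≤ Real.sqrt (3/Λ) := by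
      rw [hce]
      apply Real.sqrt_le_sqrt
      rw [div_le_div_iff₀ hΛ hΛ]
      nlinarith
    linarith
  have hfR : f R < 0 := by
    have h1 : 3/Λ < R^2 := by nlinarith [hR3, hRpos]
    have h2 : 3 < Λ * R^2 := by
      rw [div_lt_iff₀ hΛ] at h1; linarith
    have hR0 : 0 < R := by linarith
    have h3 : R < Λ/3 * R^3 := by nlinarith [mul_lt_mul_of_pos_left h2 hR0]
    simp only [hf]
    linarith
  obtain ⟨rI, hrImem, hrI⟩ : ∃ x ∈ Set.Icc c R, f x = 0 := by
    have := intermediate_value_Icc' hRc.le hcont.continuousOn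
    exact this ⟨hfR.le, hfcpos.le⟩
  have hcrI : c < rI := by
    rcases hrImem.1.lt_or_eq with h | h
    · exact h
    · exfalso; rw [← h] at hrI; linarith
  refine ⟨rH, rI, hrH0, hrHc.trans hcrI, hrH, hrI, ?_, ?_⟩
  · intro r hr0 hr
    rcases le_or_gt r c with h | h
    · left
      exact hmono.injOn ⟨hr0.le, h⟩ ⟨hrH0.le, hrHc.le⟩ (by rw [hrH]; exact hr)
    · right
      exact hanti.injOn (Set.mem_Ici.mpr h.le) (Set.mem_Ici.mpr hrImem.1)
        (by rw [hrI]; exact hr)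
  · intro r hr
    rcases le_or_gt r c with h | h
    · have := hmono ⟨hrH0.le, hrHc.le⟩ ⟨(hrH0.trans hr.1).le, h⟩ hr.1
      rw [hrH] at this; exact this
    · have := hanti (Set.mem_Ici.mpr h.le) (Set.mem_Ici.mpr hcrI.le) hr.2
      rw [hrI] at this; exact this
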